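/- If Z is a minimal lattice-subspace of ℝ^m containing linearly independent vectors y_1,...,y_r ∈ ℝ^m_+ and {b_1,...,b_d} is a positive basis of Z, then this basis has a set of nodes: there exist indices i_1,...,i_d such that b_k(i_k) > 0 and b_j(i_k) = 0 for all j ≠ k. -/
import Mathlib


/-- `X` is a lattice-subspace of `ℝ^m`: every pair of elements of `X` has a least
upper bound and a greatest lower bound within `X` (for the componentwise order). -/
def IsLatticeSubspace {m : ℕ} (X : Submodule ℝ (Fin m → ℝ)) : Prop :=
  ∀ x ∈ X, ∀ y ∈ X,
    (∃ z ∈ X, x ≤ z ∧ y ≤ z ∧ ∀ w ∈ X, x ≤ w → y ≤ w → z ≤ w) ∧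
    (∃ z ∈ X, z ≤ x ∧ z ≤ y ∧ ∀ w ∈ X, w ≤ x → w ≤ y → w ≤ z)

/-- `b` is a positive basis of the subspace `X` of `ℝ^m`: `b` is a basis of `X` and
the positive cone `X ∩ ℝ^m₊` is exactly the set of nonnegative combinations of the `b i`. -/
def IsPositiveBasis {m r : ℕ} (X : Submodule ℝ (Fin m → ℝ)) (b : Fin r → Fin m → ℝ) : Prop :=
  LinearIndependent ℝ b ∧ Submodule.span ℝ (Set.range b) = X ∧
  {x : Fin m → ℝ | x ∈ X ∧ 0 ≤ x} =
    {x : Fin m → ℝ | ∃ c : Fin r → ℝ, (∀ i, 0 ≤ c i) ∧ x = ∑ i, c i • b i}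

/-- A positive basis of a minimal lattice-subspace containing finitely many
linearly independent nonnegative vectors is a basis with nodes. -/
theorem positiveBasis_of_minimal_latticeSubspace_has_nodes {m r d : ℕ}
    (y : Fin r → Fin m → ℝ) (hpos : ∀ k, 0 ≤ y k) (hind : LinearIndependent ℝ y)
    (Z : Submodule ℝ (Fin m → ℝ)) (hZlat : IsLatticeSubspace Z)
    (hZy : ∀ k, y k ∈ Z)
    (hZmin : ∀ W : Submodule ℝ (Fin m → ℝ), W ≤ Z → IsLatticeSubspace W →
      (∀ k, y k ∈ W) → W = Z)
    (b : Fin d → Fin m → ℝ) (hb : IsPositiveBasis Z b) :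
    ∃ node : Fin d → Fin m, ∀ k : Fin d,
      0 < b k (node k) ∧ ∀ j : Fin d, j ≠ k → b j (node k) = 0 := by
  obtain ⟨hli, hspan, hcone⟩ := hb
  have hbZ : ∀ j, b j ∈ Z := by
    intro j
    rw [← hspan]
    exact Submodule.subset_span ⟨j, rfl⟩
  have hbpos : ∀ j, 0 ≤ b j := by
    intro j
    have hmem : b j ∈ {x : Fin m → ℝ | ∃ c : Fin d → ℝ, (∀ i, 0 ≤ c i) ∧ x = ∑ i, c i • b i} := by
      refine ⟨fun i => if i = j then 1 else 0, fun i => by positivity, ?_⟩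
      simp [ite_smul]
    rw [← hcone] at hmem
    exact hmem.2
  have key : ∀ k : Fin d, ∃ i : Fin m, 0 < b k i ∧ ∀ j : Fin d, j ≠ k → b j i = 0 := by
    intro k
    by_contra hno
    push_neg at hno
    -- support of b k is nonempty
    have hbk0 : b k ≠ 0 := hli.ne_zero k
    have hSne : ∃ i, 0 < b k i := by
      by_contra h
      push_neg at h
      apply hbk0
      funext i
      exact le_antisymm (h i) (hbpos k i)
    set S : Finset (Fin m) := Finset.univ.filter (fun i => 0 < b k i) with hS
    have hSne' : S.Nonempty := by
      obtain ⟨i, hi⟩ := hSne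
      exact ⟨i, by simp [hS, hi]⟩
    set u : Fin m → ℝ := ∑ j ∈ Finset.univ.erase k, b j with hu
    have hupos : ∀ i, 0 ≤ u i := by
      intro i
      rw [hu, Finset.sum_apply]
      exact Finset.sum_nonneg fun j _ => hbpos j i
    have huS : ∀ i ∈ S, 0 < u i := by
      intro i hi
      have hbki : 0 < b k i := by simpa [hS] using hi
      obtain ⟨j, hjk, hji⟩ := hno i hbki
      have hji' : 0 < b j i := lt_of_le_of_ne (hbpos j i) (Ne.symm hji)
      rw [hu, Finset.sum_apply]
      refine Finset.sum_pos' (fun l _ => hbpos l i) ⟨j, ?_, hji'⟩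
      simp [hjk]
    set ε : ℝ := S.inf' hSne' (fun i => u i / b k i) with hε
    have hεpos : 0 < ε := by
      rw [hε]
      apply Finset.lt_inf'_iff hSne' |>.mpr
      intro i hi
      have hbki : 0 < b k i := by simpa [hS] using hi
      exact div_pos (huS i hi) hbki
    have hle : ∀ i, ε * b k i ≤ u i := by
      intro i
      by_cases hi : 0 < b k i
      · have hiS : i ∈ S := by simp [hS, hi]
        have := Finset.inf'_le (fun i => u i / b k i) hiS
        calc ε * b k i ≤ (u i / b k i) * b k i := by
              exact mul_le_mul_of_nonneg_right this (le_of_lt hi)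
          _ = u i := div_mul_cancel₀ _ (ne_of_gt hi)
      · have : b k i = 0 := le_antisymm (le_of_not_gt hi) (hbpos k i)
        rw [this, mul_zero]
        exact hupos i
    -- v = u - ε • b k is in Z ∩ ℝ^m₊
    set v : Fin m → ℝ := u - ε • b k with hv
    have hvZ : v ∈ Z := by
      apply Submodule.sub_mem
      · exact Submodule.sum_mem _ fun j _ => hbZ j
      · exact Submodule.smul_mem _ _ (hbZ k)
    have hvpos : (0 : Fin m → ℝ) ≤ v := by
      intro i
      simp only [hv, Pi.sub_apply, Pi.smul_apply, smul_eq_mul, Pi.zero_apply]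
      linarith [hle i]
    have hmem : v ∈ {x : Fin m → ℝ | ∃ c : Fin d → ℝ, (∀ i, 0 ≤ c i) ∧ x = ∑ i, c i • b i} := by
      rw [← hcone]; exact ⟨hvZ, hvpos⟩
    obtain ⟨c, hc, hvc⟩ := hmem
    -- v also equals ∑ a j • b j with a k = -ε
    have h1 : ∑ j ∈ Finset.univ.erase k, (if j = k then -ε else 1) • b j
        = ∑ j ∈ Finset.univ.erase k, b j := by
      refine Finset.sum_congr rfl fun j hj => ?_
      rw [if_neg (Finset.ne_of_mem_erase hj), one_smul]
    have hva : v = ∑ j, (if j = k then -ε else 1) • b j := by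
      rw [hv, hu,
        ← Finset.sum_erase_add _ (fun j => (if j = k then -ε else 1) • b j) (Finset.mem_univ k),
        h1, if_pos rfl]
      module
    have hzero : ∑ j, (c j - (if j = k then -ε else 1)) • b j = 0 := by
      simp only [sub_smul, Finset.sum_sub_distrib]
      rw [← hvc, ← hva, sub_self]
    have hck := (Fintype.linearIndependent_iff.mp hli) _ hzero k
    simp only [if_pos rfl, if_true, sub_eq_zero] at hck
    have := hc k
    rw [hck] at this
    linarith
  choose node hnode using key
  exact ⟨node, hnode⟩
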